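/- Let {f_t} be a real sequence, ε > 0, and suppose there exists t_ε such that for all t ≥ t_ε: (i) if f_t ≥ ε then f_{t+1} ≤ f_t - c β_t for some c > 0, and (ii) |f_{t+1} - f_t| < ε, where β_t > 0 with Σ_t β_t = ∞. Then limsup_{t→∞} f_t ≤ 2ε. -/
import Mathlib


open Filter

theorem stmt_17 (f β : ℕ → ℝ) (hβpos : ∀ t, 0 < β t)
    (hβdiv : ¬ Summable β) (ε c : ℝ) (hε : 0 < ε) (hc : 0 < c)
    (tε : ℕ)
    (hdec : ∀ t ≥ tε, ε ≤ f t → f (t + 1) ≤ f t - c * β t)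
    (hclose : ∀ t ≥ tε, |f (t + 1) - f t| < ε) :
    Filter.limsup f atTop ≤ 2 * ε := by
  -- Step 1: there exists t0 ≥ tε with f t0 < ε
  have hex : ∃ t0, tε ≤ t0 ∧ f t0 < ε := by
    by_contra h
    push_neg at h
    have hall : ∀ t ≥ tε, ε ≤ f t := fun t ht => h t ht
    -- induction: f (tε + n) ≤ f tε - c * partial sum
    have hind : ∀ n, f (tε + n) ≤ f tε - c * ∑ i ∈ Finset.range n, β (tε + i) := by
      intro n
      induction n with
      | zero => simp
      | succ n ih =>
        have h1 := hdec (tε + n) (Nat.le_add_right _ _) (hall _ (Nat.le_add_right _ _))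
        rw [Finset.sum_range_succ]
        have : tε + (n + 1) = (tε + n) + 1 := by ring
        rw [this]
        nlinarith [h1, ih]
    -- partial sums diverge
    have hβ' : ¬ Summable (fun i => β (tε + i)) := by
      intro hs
      have : Summable fun n => β (n + tε) := by
        apply hs.congr; intro n; simp [Nat.add_comm]
      exact hβdiv ((summable_nat_add_iff tε).mp this)
    have hdiv : Tendsto (fun n => ∑ i ∈ Finset.range n, β (tε + i)) atTop atTop := by
      have := (not_summable_iff_tendsto_nat_atTop_of_nonneg
        (fun i => (hβpos (tε + i)).le)).mp hβ'
      exact this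
    obtain ⟨n, hn⟩ := (hdiv.eventually_gt_atTop ((f tε - ε) / c)).exists
    have h1 := hind n
    have h2 := hall (tε + n) (Nat.le_add_right _ _)
    have h3 : f tε - ε < c * ∑ i ∈ Finset.range n, β (tε + i) := by
      rw [div_lt_iff₀ hc] at hn
      linarith [hn]
    linarith
  obtain ⟨t0, ht0, hft0⟩ := hex
  -- Step 2: for all t ≥ t0, f t < 2ε
  have hconf : ∀ t ≥ t0, f t < 2 * ε := by
    intro t ht
    induction t with
    | zero =>
      have : t0 = 0 := Nat.le_zero.mp ht
      subst this; linarith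
    | succ n ih =>
      rcases Nat.lt_or_ge t0 (n + 1) with h | h
      · have hn : t0 ≤ n := Nat.lt_succ_iff.mp h
        have hfn := ih hn
        have hntε : tε ≤ n := le_trans ht0 hn
        rcases lt_or_ge (f n) ε with h1 | h1
        · have := hclose n hntε
          rw [abs_sub_lt_iff] at this
          linarith [this.1]
        · have := hdec n hntε h1
          nlinarith [hβpos n]
      · have : t0 = n + 1 := le_antisymm ht h
        subst this; linarith
  -- Step 3: conclude limsup ≤ 2ε
  have hev : ∀ᶠ t in atTop, f t ≤ 2 * ε :=
    eventually_atTop.mpr ⟨t0, fun t ht => (hconf t ht).le⟩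
  have hmem : (2 * ε) ∈ {a : ℝ | ∀ᶠ n in Filter.map f atTop, n ≤ a} := by
    simpa [Filter.eventually_map] using hev
  rw [Filter.limsup, Filter.limsSup]
  by_cases hbdd : BddBelow {a : ℝ | ∀ᶠ n in Filter.map f atTop, n ≤ a}
  · exact csInf_le hbdd hmem
  · rw [Real.sInf_of_not_bddBelow hbdd]; linarith
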